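/- For any finite matroid M, the absolute value of the reduced Euler characteristic of the independence complex of M equals the sum, over all circuits C of M containing a fixed non-loop element e, of the absolute value of the reduced Euler characteristic of the independence complex of the contraction M/C. -/

import Mathlib

/-- A circuit of a matroid: a minimal dependent subset of the ground set. -/
def Matroid.IsCircuit' {α : Type*} (M : Matroid α) (C : Set α) : Prop :=
  C ⊆ M.E ∧ ¬ M.Indep C ∧ ∀ D ⊂ C, M.Indep D

/-- The contraction `M/C` of a matroid, defined as the dual of the
restriction of the dual to the complement of `C`. -/
noncomputable def Matroid.contract' {α : Type*} (M : Matroid α) (C : Set α) :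
    Matroid α :=
  ((M✶).restrict (M.E \ C))✶

open scoped Classical in
/-- The reduced Euler characteristic of the independence complex `IN(M)` of a
matroid `M` on a finite ground type: `χ̃(IN(M)) = Σ_{I independent} (−1)^(|I|−1)`. -/
noncomputable def matroidRedEuler {α : Type*} [Fintype α] (M : Matroid α) : ℤ :=
  ∑ s : Finset α, if M.Indep ↑s then -(-1 : ℤ) ^ s.card else 0

open Set

namespace Matroid

variable {α : Type*} {M : Matroid α} {C J B I : Set α} {e : α}

@[simp] lemma contract'_ground (M : Matroid α) (C : Set α) :
    (M.contract' C).E = M.E \ C := rfl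

lemma contract'_indep_iff_exists (hC : C ⊆ M.E) :
    (M.contract' C).Indep J ↔
      J ⊆ M.E \ C ∧ ∃ B, M.IsBase B ∧ M.IsBasis (B ∩ C) C ∧ J ⊆ B := by
  rw [contract', dual_indep_iff_exists']
  simp only [restrict_ground_eq]
  constructor
  · rintro ⟨hJ, B', hB', hdisj⟩
    refine ⟨hJ, ?_⟩
    rw [isBase_restrict_iff (by exact diff_subset)] at hB'
    obtain ⟨D, hD, rfl⟩ := hB'.exists_isBase
    refine ⟨M.E \ D, hD.compl_isBase_of_dual, ?_, ?_⟩
    · have := (hD.compl_isBase_of_dual.inter_isBasis_iff_compl_inter_isBasis_dual hC).mpr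
      have hDE : D ⊆ M.E := hD.subset_ground
      have h2 : M.E \ (M.E \ D) = D := by
        rw [diff_diff_cancel_left hDE]
      rw [h2] at this
      exact this hB'
    · intro x hx
      refine ⟨hJ hx |>.1, fun hxD => ?_⟩
      exact (hdisj.ne_of_mem hx ⟨hxD, hJ hx⟩) rfl
  · rintro ⟨hJ, B, hB, hBC, hJB⟩
    refine ⟨hJ, (M.E \ B) ∩ (M.E \ C), ?_, ?_⟩
    · rw [isBase_restrict_iff (by exact diff_subset)]
      exact (hB.inter_isBasis_iff_compl_inter_isBasis_dual hC).mp hBC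
    · exact Set.disjoint_left.mpr fun x hx ⟨⟨_, hxB⟩, _⟩ => hxB (hJB hx)

lemma IsCircuit'.diff_singleton_basis (hC : M.IsCircuit' C) (he : e ∈ C) :
    M.IsBasis (C \ {e}) C := by
  obtain ⟨hCE, hCdep, hmin⟩ := hC
  have hI : M.Indep (C \ {e}) := hmin _ (sdiff_singleton_ssubset.mpr he)
  refine hI.isBasis_of_subset_of_subset_closure diff_subset fun x hx => ?_
  by_cases hxe : x = e
  · subst hxe
    have hdep : M.Dep (insert x (C \ {x})) := by
      rw [insert_diff_singleton, insert_eq_of_mem hx]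
      exact ⟨hCdep, hCE⟩
    exact (hI.insert_dep_iff.mp hdep).1
  · exact M.mem_closure_of_mem ⟨hx, hxe⟩ (diff_subset.trans hCE)

lemma IsCircuit'.indep_union (hC : M.IsCircuit' C) (he : e ∈ C)
    (hJE : J ⊆ M.E \ C) (hfin : C.Finite) (hJfin : J.Finite)
    {B : Set α} (hB : M.IsBase B) (hBC : M.IsBasis (B ∩ C) C) (hJB : J ⊆ B) :
    M.Indep (J ∪ (C \ {e})) := by
  have hJC : Disjoint J C := Set.disjoint_left.mpr fun x hx => (hJE hx).2
  have hJI : M.Indep (J ∪ (B ∩ C)) :=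
    hB.indep.subset (union_subset hJB inter_subset_left)
  have hI' : M.IsBasis (C \ {e}) C := hC.diff_singleton_basis he
  have hbas : M.IsBasis (J ∪ (B ∩ C)) (J ∪ C) := by
    refine hJI.isBasis_of_subset_of_subset_closure
      (union_subset_union_right J inter_subset_right) ?_
    refine union_subset ?_ ?_
    · exact subset_union_left.trans (M.subset_closure _ hJI.subset_ground)
    · exact hBC.subset_closure.trans (M.closure_subset_closure subset_union_right)
  obtain ⟨K, hK, hIK⟩ := hI'.indep.subset_isBasis_of_subset
    (diff_subset.trans subset_union_right)
    (union_subset (hJE.trans diff_subset) hC.1)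
  have hKC : K ∩ C = C \ {e} := by
    refine (hI'.eq_of_subset_indep (hK.indep.subset inter_subset_left)
      (subset_inter hIK diff_subset) inter_subset_right).symm
  have hKdiff : K \ C ⊆ J := fun x hx =>
    (hK.subset hx.1).resolve_right hx.2
  have hcard : K.encard = (J ∪ (B ∩ C)).encard := hK.encard_eq_encard hbas
  have hJBCcard : (J ∪ (B ∩ C)).encard = J.encard + (B ∩ C).encard :=
    encard_union_eq (hJC.mono_right inter_subset_right)
  have hKsplit : K.encard = (C \ {e}).encard + (K \ C).encard := by
    nth_rewrite 1 [show K = (K ∩ C) ∪ (K \ C) by simp, hKC]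
    exact encard_union_eq (disjoint_sdiff_right.mono_left diff_subset)
  have hBCcard : (B ∩ C).encard = (C \ {e}).encard :=
    hBC.encard_eq_encard hI'
  have hKCJ : (K \ C).encard = J.encard := by
    have h1 : (C \ {e}).encard + (K \ C).encard = (C \ {e}).encard + J.encard := by
      rw [← hKsplit, hcard, hJBCcard, hBCcard, add_comm]
    exact WithTop.add_left_cancel ((hfin.subset diff_subset).encard_lt_top.ne) h1
  have : K \ C = J := hJfin.eq_of_subset_of_encard_le' hKdiff hKCJ.ge
  have hKeq : K = J ∪ (C \ {e}) := by
    rw [← this, ← hKC]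
    rw [union_comm]
    exact (inter_union_diff K C).symm
  rw [← hKeq]
  exact hK.indep

lemma IsCircuit'.contract_indep_iff (hC : M.IsCircuit' C) (he : e ∈ C)
    (hfin : C.Finite) (hJfin : J.Finite) :
    (M.contract' C).Indep J ↔ J ⊆ M.E \ C ∧ M.Indep (J ∪ (C \ {e})) := by
  rw [contract'_indep_iff_exists hC.1]
  constructor
  · rintro ⟨hJ, B, hB, hBC, hJB⟩
    exact ⟨hJ, hC.indep_union he hJ hfin hJfin hB hBC hJB⟩
  · rintro ⟨hJ, hind⟩
    obtain ⟨B, hB, hsub⟩ := hind.exists_isBase_superset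
    refine ⟨hJ, B, hB, ?_, subset_union_left.trans hsub⟩
    have hI' : M.IsBasis (C \ {e}) C := hC.diff_singleton_basis he
    have : C \ {e} = B ∩ C :=
      hI'.eq_of_subset_indep (hB.indep.subset inter_subset_left)
        (subset_inter (subset_union_right.trans hsub) diff_subset)
        inter_subset_right
    rwa [← this]

lemma IsCircuit'.contract_base (hC : M.IsCircuit' C) (he : e ∈ C)
    (hfin : C.Finite) (hJfin : J.Finite)
    (hJ : (M.contract' C).IsBase J) : M.IsBase (J ∪ (C \ {e})) := by
  obtain ⟨hJE, hind⟩ := (hC.contract_indep_iff he hfin hJfin).mp hJ.indep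
  refine hind.isBase_of_forall_insert fun x hx hins => ?_
  obtain ⟨hxE, hxJC⟩ := hx
  by_cases hxC : x ∈ C
  · rcases eq_or_ne x e with rfl | hne
    · exact hC.2.1 (hins.subset (by
        intro y hy
        rcases eq_or_ne y x with rfl | hyx
        · exact mem_insert _ _
        · exact subset_union_right.trans (subset_insert _ _) ⟨hy, hyx⟩))
    · exact hxJC (Or.inr ⟨hxC, hne⟩)
  · have hxJ : x ∉ J := fun h => hxJC (Or.inl h)
    have : (M.contract' C).Indep (insert x J) := by
      rw [hC.contract_indep_iff he hfin (hJfin.insert x)]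
      constructor
      · exact insert_subset ⟨hxE, hxC⟩ hJE
      · rwa [insert_union]
    have := hJ.eq_of_subset_indep this (subset_insert _ _)
    exact hxJ (this ▸ mem_insert x J)

lemma exists_circuit_subset [DecidableEq α] (t : Finset α) (htE : ↑t ⊆ M.E)
    (htd : ¬ M.Indep ↑t) :
    ∃ C : Finset α, C ⊆ t ∧ M.IsCircuit' ↑C := by
  induction t using Finset.strongInduction with
  | _ t ih =>
    by_cases h : ∀ x ∈ t, M.Indep ↑(t.erase x)
    · refine ⟨t, Finset.Subset.refl t, htE, htd, fun D hD => ?_⟩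
      obtain ⟨x, hxt, hxD⟩ : ∃ x ∈ t, x ∉ D := by
        obtain ⟨x, hx1, hx2⟩ := Set.exists_of_ssubset hD
        exact ⟨x, by exact_mod_cast hx1, hx2⟩
      refine (h x hxt).subset fun y hy => ?_
      have hyt : y ∈ (t : Set α) := hD.subset hy
      have : y ≠ x := fun hyx => hxD (hyx ▸ hy)
      simp only [Finset.coe_erase, Set.mem_diff, Set.mem_singleton_iff]
      exact ⟨hyt, this⟩
    · push_neg at h
      obtain ⟨x, hxt, hxd⟩ := h
      obtain ⟨C, hC1, hC2⟩ := ih (t.erase x) (Finset.erase_ssubset hxt)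
        ((Finset.coe_subset.mpr (Finset.erase_subset x t)).trans htE) hxd
      exact ⟨C, hC1.trans (Finset.erase_subset x t), hC2⟩

lemma fundamental_circuit_unique_aux {s C C' : Set α}
    (hs : M.Indep s)
    (hC : M.IsCircuit' C) (hCs : C ⊆ insert e s)
    (hC' : M.IsCircuit' C') (heC' : e ∈ C') (hC's : C' ⊆ insert e s) :
    C ⊆ C' := by
  by_contra hsub
  obtain ⟨x, hxC, hxC'⟩ : ∃ x ∈ C, x ∉ C' := not_subset.mp hsub
  have hxe : x ≠ e := fun h => hxC' (h ▸ heC')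
  have hxs : x ∈ s := ((hCs hxC).resolve_left hxe)
  have h1 : M.Indep (C' \ {e}) := hC'.2.2 _ (sdiff_singleton_ssubset.mpr heC')
  have h2 : e ∈ M.closure (C' \ {e}) := by
    have hdep : M.Dep (insert e (C' \ {e})) := by
      rw [insert_diff_singleton, insert_eq_of_mem heC']
      exact ⟨hC'.2.1, hC'.1⟩
    exact (h1.insert_dep_iff.mp hdep).1
  have hC'sub : C' \ {e} ⊆ s \ {x} := fun y hy =>
    ⟨(hC's hy.1).resolve_left hy.2, fun h => hxC' ((h : y = x) ▸ hy.1)⟩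
  have h3 : e ∈ M.closure (s \ {x}) :=
    M.closure_subset_closure hC'sub h2
  have h4 : M.Indep (C \ {x}) := hC.2.2 _ (sdiff_singleton_ssubset.mpr hxC)
  have h5 : x ∈ M.closure (C \ {x}) := by
    have hdep : M.Dep (insert x (C \ {x})) := by
      rw [insert_diff_singleton, insert_eq_of_mem hxC]
      exact ⟨hC.2.1, hC.1⟩
    exact (h4.insert_dep_iff.mp hdep).1
  have hCsub : C \ {x} ⊆ insert e (s \ {x}) := fun y hy => by
    rcases hCs hy.1 with h | h
    · exact Or.inl h
    · exact Or.inr ⟨h, hy.2⟩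
  have h6 : x ∈ M.closure (insert e (s \ {x})) :=
    M.closure_subset_closure hCsub h5
  rw [closure_insert_eq_of_mem_closure h3] at h6
  exact hs.notMem_closure_diff_of_mem hxs h6

lemma fundamental_circuit_unique {s : Set α} {C C' : Finset α}
    (hs : M.Indep s)
    (hC : M.IsCircuit' ↑C) (heC : e ∈ C) (hCs : ↑C ⊆ insert e s)
    (hC' : M.IsCircuit' ↑C') (heC' : e ∈ C') (hC's : ↑C' ⊆ insert e s) :
    C = C' :=
  Finset.coe_injective (Set.Subset.antisymm
    (fundamental_circuit_unique_aux hs hC hCs hC' heC' hC's)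
    (fundamental_circuit_unique_aux hs hC' hC's hC heC hCs))

end Matroid
section Euler

open Set Matroid

variable {α : Type*} [Fintype α] [DecidableEq α] {M : Matroid α} {e : α}

open scoped Classical in
lemma matroidRedEuler_pairing (M : Matroid α) (e : α) :
    matroidRedEuler M =
      ∑ s : Finset α, (if M.Indep ↑s ∧ e ∉ s ∧ ¬ M.Indep ↑(insert e s)
        then -(-1 : ℤ) ^ s.card else 0) := by
  classical
  set F : Finset α → ℤ := fun s => if M.Indep ↑s then -(-1 : ℤ) ^ s.card else 0 with hF
  set G : Finset α → ℤ := fun s => if M.Indep ↑s ∧ e ∉ s ∧ ¬ M.Indep ↑(insert e s)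
        then -(-1 : ℤ) ^ s.card else 0 with hG
  have key : ∑ s : Finset α, (F s - G s) = 0 := by
    apply Finset.sum_ninvolution (g := fun s => if e ∈ s then s.erase e else insert e s)
    · intro s
      by_cases hes : e ∈ s
      · simp only [if_pos hes]
        have h2 : insert e (s.erase e) = s := Finset.insert_erase hes
        by_cases hind : M.Indep ↑s
        · have h1 : M.Indep ↑(s.erase e) := hind.subset (by
            rw [Finset.coe_erase]; exact diff_subset)
          have h3 : (s.erase e).card + 1 = s.card := Finset.card_erase_add_one hes
          rw [hF, hG]
          simp only
          rw [if_pos hind, if_neg (show ¬(M.Indep ↑s ∧ e ∉ s ∧ ¬ M.Indep ↑(insert e s))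
              from fun h => h.2.1 hes), if_pos h1,
            if_neg (show ¬(M.Indep ↑(s.erase e) ∧ e ∉ s.erase e ∧
                ¬ M.Indep ↑(insert e (s.erase e)))
              from fun h => h.2.2 (by rw [h2]; exact hind)), ← h3]
          ring
        · rw [hF, hG]
          simp only
          rw [if_neg hind, if_neg (show ¬(M.Indep ↑s ∧ e ∉ s ∧ ¬ M.Indep ↑(insert e s))
            from fun h => hind h.1)]
          by_cases h1 : M.Indep ↑(s.erase e)
          · rw [if_pos h1, if_pos (show M.Indep ↑(s.erase e) ∧ e ∉ s.erase e ∧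
                ¬ M.Indep ↑(insert e (s.erase e))
              from ⟨h1, Finset.notMem_erase e s, by rw [h2]; exact hind⟩)]
            ring
          · rw [if_neg h1, if_neg (show ¬(M.Indep ↑(s.erase e) ∧ e ∉ s.erase e ∧
                ¬ M.Indep ↑(insert e (s.erase e))) from fun h => h1 h.1)]
            ring
      · simp only [if_neg hes]
        by_cases hins : M.Indep ↑(insert e s)
        · have hind : M.Indep ↑s := hins.subset (by
            rw [Finset.coe_insert]; exact subset_insert _ _)
          have h3 : (insert e s).card = s.card + 1 := Finset.card_insert_of_notMem hes
          rw [hF, hG]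
          simp only
          rw [if_pos hind, if_pos hins,
            if_neg (show ¬(M.Indep ↑s ∧ e ∉ s ∧ ¬ M.Indep ↑(insert e s))
              from fun h => h.2.2 hins),
            if_neg (show ¬(M.Indep ↑(insert e s) ∧ e ∉ insert e s ∧
                ¬ M.Indep ↑(insert e (insert e s)))
              from fun h => h.2.1 (Finset.mem_insert_self e s)), h3]
          ring
        · rw [hF, hG]
          simp only
          rw [if_neg hins,
            if_neg (show ¬(M.Indep ↑(insert e s) ∧ e ∉ insert e s ∧
                ¬ M.Indep ↑(insert e (insert e s)))
              from fun h => h.2.1 (Finset.mem_insert_self e s))]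
          by_cases hind : M.Indep ↑s
          · rw [if_pos hind, if_pos (show M.Indep ↑s ∧ e ∉ s ∧ ¬ M.Indep ↑(insert e s)
              from ⟨hind, hes, hins⟩)]
            ring
          · rw [if_neg hind, if_neg (show ¬(M.Indep ↑s ∧ e ∉ s ∧ ¬ M.Indep ↑(insert e s))
              from fun h => hind h.1)]
            ring
    · intro s _
      by_cases hes : e ∈ s
      · simp only [if_pos hes]
        intro h
        exact (h ▸ Finset.notMem_erase e s) hes
      · simp only [if_neg hes]
        intro h
        exact hes (h ▸ Finset.mem_insert_self e s)
    · intro s; exact Finset.mem_univ _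
    · intro s
      by_cases hes : e ∈ s
      · simp only [if_pos hes, if_neg (Finset.notMem_erase e s)]
        exact Finset.insert_erase hes
      · simp only [if_neg hes, if_pos (Finset.mem_insert_self e s)]
        exact Finset.erase_insert hes
  rw [Finset.sum_sub_distrib, sub_eq_zero] at key
  exact key

open scoped Classical in
lemma matroidRedEuler_partition (M : Matroid α) (heE : e ∈ M.E) :
    ∑ s : Finset α, (if M.Indep ↑s ∧ e ∉ s ∧ ¬ M.Indep ↑(insert e s)
        then -(-1 : ℤ) ^ s.card else 0) =
    ∑ C ∈ Finset.univ.filter (fun C : Finset α => M.IsCircuit' ↑C ∧ e ∈ C),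
      ∑ s : Finset α, (if M.Indep ↑s ∧ e ∉ s ∧ C ⊆ insert e s
        then -(-1 : ℤ) ^ s.card else 0) := by
  rw [Finset.sum_comm]
  apply Finset.sum_congr rfl
  intro s _
  by_cases hGc : M.Indep ↑s ∧ e ∉ s ∧ ¬ M.Indep ↑(insert e s)
  · obtain ⟨hind, hes, hdep⟩ := hGc
    have hsE : ↑(insert e s) ⊆ M.E := by
      rw [Finset.coe_insert]
      exact Set.insert_subset heE hind.subset_ground
    obtain ⟨C₀, hC₀sub, hC₀⟩ := M.exists_circuit_subset (insert e s) hsE hdep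
    have heC₀ : e ∈ C₀ := by
      by_contra h
      refine hC₀.2.1 (hind.subset ?_)
      intro x hx
      have hx' : x ∈ insert e s := hC₀sub hx
      rcases Finset.mem_insert.mp hx' with rfl | hxs
      · exact absurd hx h
      · exact hxs
    have hC₀sub' : (C₀ : Set α) ⊆ insert e ↑s := by
      rw [← Finset.coe_insert]
      exact_mod_cast hC₀sub
    rw [if_pos ⟨hind, hes, hdep⟩,
      Finset.sum_eq_single_of_mem C₀
        (Finset.mem_filter.mpr ⟨Finset.mem_univ _, hC₀, heC₀⟩)
        (fun C hCmem hne => ?_),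
      if_pos ⟨hind, hes, hC₀sub⟩]
    rw [Finset.mem_filter] at hCmem
    rw [if_neg]
    rintro ⟨-, -, hCsub⟩
    have hCsub' : (C : Set α) ⊆ insert e ↑s := by
      rw [← Finset.coe_insert]
      exact_mod_cast hCsub
    exact hne (M.fundamental_circuit_unique hind hCmem.2.1 hCmem.2.2 hCsub'
      hC₀ heC₀ hC₀sub')
  · rw [if_neg hGc, Finset.sum_eq_zero]
    intro C hCmem
    rw [Finset.mem_filter] at hCmem
    rw [if_neg]
    rintro ⟨hind, hes, hCsub⟩
    refine hGc ⟨hind, hes, fun hins => hCmem.2.1.2.1 (hins.subset ?_)⟩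
    exact_mod_cast hCsub

open scoped Classical in
lemma matroidRedEuler_circuit_fiber (M : Matroid α) {C : Finset α}
    (hC : M.IsCircuit' ↑C) (heC : e ∈ C) :
    ∑ s : Finset α, (if M.Indep ↑s ∧ e ∉ s ∧ C ⊆ insert e s
        then -(-1 : ℤ) ^ s.card else 0)
    = (-1 : ℤ) ^ (C.card - 1) * matroidRedEuler (M.contract' ↑C) := by
  have hCcoe : (↑(C.erase e) : Set α) = (↑C : Set α) \ {e} := Finset.coe_erase e C
  have hcard : (C.erase e).card = C.card - 1 := Finset.card_erase_of_mem heC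
  rw [matroidRedEuler, Finset.mul_sum, ← Finset.sum_filter
    (fun s : Finset α => M.Indep ↑s ∧ e ∉ s ∧ C ⊆ insert e s)
    (fun s : Finset α => -(-1 : ℤ) ^ s.card)]
  have hrw : ∀ J : Finset α,
      (-1 : ℤ) ^ (C.card - 1) * (if (M.contract' ↑C).Indep ↑J
          then -(-1 : ℤ) ^ J.card else 0)
      = (if (M.contract' ↑C).Indep ↑J
          then (-1 : ℤ) ^ (C.card - 1) * (-(-1 : ℤ) ^ J.card) else 0) := by
    intro J
    by_cases h : (M.contract' ↑C).Indep ↑J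
    · rw [if_pos h, if_pos h]
    · rw [if_neg h, if_neg h, mul_zero]
  rw [Finset.sum_congr rfl fun J _ => hrw J, ← Finset.sum_filter
    (fun J : Finset α => (M.contract' ↑C).Indep ↑J)
    (fun J : Finset α => (-1 : ℤ) ^ (C.card - 1) * (-(-1 : ℤ) ^ J.card))]
  refine Finset.sum_bij' (fun s _ => s \ C.erase e) (fun J _ => J ∪ C.erase e)
    ?_ ?_ ?_ ?_ ?_
  · -- maps into contract-indep sets
    intro s hs
    rw [Finset.mem_filter] at hs
    obtain ⟨-, hind, hes, hCs⟩ := hs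
    have herase : C.erase e ⊆ s := by
      intro x hx
      obtain ⟨hxe, hxC⟩ := Finset.mem_erase.mp hx
      exact (Finset.mem_insert.mp (hCs hxC)).resolve_left hxe
    rw [Finset.mem_filter]
    refine ⟨Finset.mem_univ _, ?_⟩
    rw [(hC.contract_indep_iff heC (Set.toFinite _) (Set.toFinite _))]
    constructor
    · intro x hx
      rw [Finset.coe_sdiff] at hx
      obtain ⟨hxs, hxCe⟩ := hx
      refine ⟨hind.subset_ground hxs, fun hxC => hxCe ?_⟩
      rw [hCcoe]
      refine ⟨hxC, fun hxe => hes ?_⟩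
      rw [← (hxe : x = e)] at *
      exact hxs
    · rw [Finset.coe_sdiff, hCcoe, Set.diff_union_self,
        Set.union_eq_self_of_subset_right (hCcoe ▸ Finset.coe_subset.mpr herase)]
      exact hind
  · -- reverse map
    intro J hJ
    rw [Finset.mem_filter] at hJ
    obtain ⟨-, hJind⟩ := hJ
    rw [(hC.contract_indep_iff heC (Set.toFinite _) (Set.toFinite _))] at hJind
    obtain ⟨hJE, hind⟩ := hJind
    rw [Finset.mem_filter]
    refine ⟨Finset.mem_univ _, ?_, ?_, ?_⟩
    · rw [Finset.coe_union, hCcoe]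
      exact hind
    · rw [Finset.mem_union]
      rintro (h | h)
      · exact (hJE h).2 heC
      · exact (Finset.notMem_erase e C) h
    · intro x hxC
      rcases eq_or_ne x e with rfl | hne
      · exact Finset.mem_insert_self _ _
      · exact Finset.mem_insert_of_mem (Finset.mem_union_right _
          (Finset.mem_erase.mpr ⟨hne, hxC⟩))
  · -- left inverse
    intro s hs
    rw [Finset.mem_filter] at hs
    obtain ⟨-, hind, hes, hCs⟩ := hs
    have herase : C.erase e ⊆ s := by
      intro x hx
      obtain ⟨hxe, hxC⟩ := Finset.mem_erase.mp hx
      exact (Finset.mem_insert.mp (hCs hxC)).resolve_left hxe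
    exact Finset.sdiff_union_of_subset herase
  · -- right inverse
    intro J hJ
    rw [Finset.mem_filter] at hJ
    obtain ⟨-, hJind⟩ := hJ
    rw [(hC.contract_indep_iff heC (Set.toFinite _) (Set.toFinite _))] at hJind
    have hdisj : Disjoint J (C.erase e) := by
      rw [Finset.disjoint_left]
      intro x hxJ hxC
      exact (hJind.1 hxJ).2 (Finset.mem_of_mem_erase hxC)
    rw [Finset.union_sdiff_cancel_right hdisj]
  · -- values
    intro s hs
    rw [Finset.mem_filter] at hs
    obtain ⟨-, hind, hes, hCs⟩ := hs
    have herase : C.erase e ⊆ s := by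
      intro x hx
      obtain ⟨hxe, hxC⟩ := Finset.mem_erase.mp hx
      exact (Finset.mem_insert.mp (hCs hxC)).resolve_left hxe
    have hc : (s \ C.erase e).card + (C.card - 1) = s.card := by
      rw [← hcard]
      exact Finset.card_sdiff_add_card_eq_card herase
    rw [← hc, pow_add]
    ring

open scoped Classical in
lemma matroidRedEuler_eq_sum (M : Matroid α) (heE : e ∈ M.E) :
    matroidRedEuler M =
      ∑ C ∈ Finset.univ.filter (fun C : Finset α => M.IsCircuit' ↑C ∧ e ∈ C),
        (-1 : ℤ) ^ (C.card - 1) * matroidRedEuler (M.contract' ↑C) := by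
  rw [matroidRedEuler_pairing M e, matroidRedEuler_partition M heE]
  refine Finset.sum_congr rfl fun C hc => ?_
  rw [Finset.mem_filter] at hc
  exact matroidRedEuler_circuit_fiber M hc.2.1 hc.2.2

lemma contract_base_ncard {C : Finset α} (hC : M.IsCircuit' ↑C) (heC : e ∈ C)
    {B J : Set α} (hB : M.IsBase B) (hJ : (M.contract' ↑C).IsBase J) :
    J.ncard + (C.card - 1) = B.ncard := by
  have hMB : M.IsBase (J ∪ ((↑C : Set α) \ {e})) :=
    hC.contract_base heC (Set.toFinite _) (Set.toFinite _) hJ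
  have hJE : J ⊆ M.E \ ↑C := hJ.subset_ground
  have hdisj : Disjoint J ((↑C : Set α) \ {e}) :=
    Set.disjoint_left.mpr fun x hx hx' => (hJE hx).2 hx'.1
  have hcC : ((↑C : Set α) \ {e}).ncard = C.card - 1 := by
    rw [← Finset.coe_erase, Set.ncard_coe_finset]
    exact Finset.card_erase_of_mem heC
  rw [← hcC, ← Set.ncard_union_eq hdisj (Set.toFinite _) (Set.toFinite _)]
  exact hMB.ncard_eq_ncard_of_isBase hB

open scoped Classical in
lemma matroidRedEuler_loops {B : Set α} (hL : ∀ x ∈ M.E, x ∈ M.closure ∅)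
    (hB : M.IsBase B) :
    ∃ k : ℕ, matroidRedEuler M = (-1 : ℤ) ^ (B.ncard + 1) * k := by
  have hBempty : B = ∅ := by
    ext x
    simp only [Set.mem_empty_iff_false, iff_false]
    intro hx
    exact hB.indep.notMem_closure_diff_of_mem hx
      (M.closure_subset_closure (Set.empty_subset _) (hL x (hB.subset_ground hx)))
  have hind : ∀ s : Finset α, M.Indep ↑s → s = ∅ := by
    intro s hs
    by_contra hne
    obtain ⟨x, hx⟩ := Finset.nonempty_iff_ne_empty.mpr hne
    have hxs : x ∈ (s : Set α) := by exact_mod_cast hx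
    exact hs.notMem_closure_diff_of_mem hxs
      (M.closure_subset_closure (Set.empty_subset _) (hL x (hs.subset_ground hxs)))
  refine ⟨1, ?_⟩
  rw [matroidRedEuler, Finset.sum_eq_single (∅ : Finset α)]
  · rw [if_pos (by rw [Finset.coe_empty]; exact M.empty_indep)]
    simp [hBempty]
  · intro b _ hbne
    rw [if_neg (fun h => hbne (hind b h))]
  · intro h
    exact absurd (Finset.mem_univ _) h

open scoped Classical in
lemma matroidRedEuler_sign : ∀ (n : ℕ) (M : Matroid α) (B : Set α),
    M.E.ncard ≤ n → M.IsBase B →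
    ∃ k : ℕ, matroidRedEuler M = (-1 : ℤ) ^ (B.ncard + 1) * k := by
  intro n
  induction n with
  | zero =>
    intro M B hn hB
    refine matroidRedEuler_loops (fun x hx => ?_) hB
    have h0 : M.E = ∅ := (Set.ncard_eq_zero (Set.toFinite _)).mp (Nat.le_zero.mp hn)
    exact absurd (h0 ▸ hx) (Set.notMem_empty x)
  | succ n ih =>
    intro M B hn hB
    by_cases hL : ∀ x ∈ M.E, x ∈ M.closure ∅
    · exact matroidRedEuler_loops hL hB
    · push_neg at hL
      obtain ⟨e, heE, -⟩ := hL
      have key : ∀ C : Finset α, ∃ k : ℕ, (M.IsCircuit' ↑C ∧ e ∈ C) →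
          (-1 : ℤ) ^ (C.card - 1) * matroidRedEuler (M.contract' ↑C)
            = (-1 : ℤ) ^ (B.ncard + 1) * k := by
        intro C
        by_cases hc : M.IsCircuit' ↑C ∧ e ∈ C
        · obtain ⟨B', hB'⟩ := (M.contract' (↑C : Set α)).exists_isBase
          have hground : (M.contract' (↑C : Set α)).E.ncard ≤ n := by
            have h1 : (M.contract' (↑C : Set α)).E = M.E \ ↑C := rfl
            have h2 : M.E \ (↑C : Set α) ⊆ M.E \ {e} :=
              Set.diff_subset_diff_right (by simpa using hc.2)
            have h3 : (M.E \ (↑C : Set α)).ncard ≤ (M.E \ {e}).ncard :=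
              Set.ncard_le_ncard h2 (Set.toFinite _)
            have h4 : (M.E \ ({e} : Set α)).ncard = M.E.ncard - 1 :=
              Set.ncard_diff_singleton_of_mem heE
            have h5 : 1 ≤ M.E.ncard := (Set.ncard_pos (Set.toFinite _)).mpr ⟨e, heE⟩
            rw [h1]
            omega
          obtain ⟨k, hk⟩ := ih (M.contract' ↑C) B' hground hB'
          refine ⟨k, fun _ => ?_⟩
          have hcard : B'.ncard + (C.card - 1) = B.ncard :=
            contract_base_ncard hc.1 hc.2 hB hB'
          rw [hk, ← mul_assoc, ← pow_add,
            show C.card - 1 + (B'.ncard + 1) = B.ncard + 1 by omega]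
        · exact ⟨0, fun h => absurd h hc⟩
      choose f hf using key
      refine ⟨∑ C ∈ Finset.univ.filter
          (fun C : Finset α => M.IsCircuit' ↑C ∧ e ∈ C), f C, ?_⟩
      rw [matroidRedEuler_eq_sum M heE,
        Finset.sum_congr rfl (fun C hc => hf C (Finset.mem_filter.mp hc).2),
        ← Finset.mul_sum]
      push_cast
      rfl

open scoped Classical in
theorem abs_redEuler_eq_sum_circuits' (M : Matroid α) (e : α) (heE : e ∈ M.E) :
    (matroidRedEuler M).natAbs =
      ∑ C ∈ Finset.univ.filter
          (fun C : Finset α => M.IsCircuit' ↑C ∧ e ∈ C),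
        (matroidRedEuler (M.contract' ↑C)).natAbs := by
  obtain ⟨B, hB⟩ := M.exists_isBase
  obtain ⟨k, hk⟩ := matroidRedEuler_sign M.E.ncard M B le_rfl hB
  have habs : (matroidRedEuler M).natAbs = k := by
    rw [hk]
    simp [Int.natAbs_mul, Int.natAbs_pow]
  have hterm : ∀ C ∈ Finset.univ.filter
      (fun C : Finset α => M.IsCircuit' ↑C ∧ e ∈ C),
      (-1 : ℤ) ^ (C.card - 1) * matroidRedEuler (M.contract' ↑C)
        = (-1 : ℤ) ^ (B.ncard + 1)
            * ((matroidRedEuler (M.contract' ↑C)).natAbs : ℤ) := by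
    intro C hc
    rw [Finset.mem_filter] at hc
    obtain ⟨B', hB'⟩ := (M.contract' (↑C : Set α)).exists_isBase
    obtain ⟨k', hk'⟩ :=
      matroidRedEuler_sign (M.contract' (↑C : Set α)).E.ncard _ B' le_rfl hB'
    have hcard : B'.ncard + (C.card - 1) = B.ncard :=
      contract_base_ncard hc.2.1 hc.2.2 hB hB'
    rw [hk',
      show (((((-1 : ℤ) ^ (B'.ncard + 1) * k').natAbs : ℕ)) : ℤ) = (k' : ℤ) by
        simp [Int.natAbs_mul, Int.natAbs_pow],
      ← mul_assoc, ← pow_add,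
      show C.card - 1 + (B'.ncard + 1) = B.ncard + 1 by omega]
  have hsum := matroidRedEuler_eq_sum M heE
  rw [Finset.sum_congr rfl hterm, ← Finset.mul_sum, hk] at hsum
  have hcancel := mul_left_cancel₀
    (pow_ne_zero (B.ncard + 1) (by norm_num : (-1 : ℤ) ≠ 0)) hsum
  have : ((matroidRedEuler M).natAbs : ℤ) =
      ∑ C ∈ Finset.univ.filter
          (fun C : Finset α => M.IsCircuit' ↑C ∧ e ∈ C),
        ((matroidRedEuler (M.contract' ↑C)).natAbs : ℤ) := by
    rw [habs, hcancel]
  exact_mod_cast this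

end Euler

open scoped Classical in
/-- **Euler characteristics and circuit contractions.**
For a finite matroid `M` with a fixed non-loop element `e`,
`|χ̃(IN(M))| = Σ_{C circuit of M, e ∈ C} |χ̃(IN(M/C))|`. -/
theorem abs_redEuler_eq_sum_circuits {α : Type*} [Fintype α] [DecidableEq α]
    (M : Matroid α) (e : α) (heE : e ∈ M.E) (heNonloop : e ∉ M.closure ∅) :
    (matroidRedEuler M).natAbs =
      ∑ C ∈ Finset.univ.filter
          (fun C : Finset α => M.IsCircuit' ↑C ∧ e ∈ C),
        (matroidRedEuler (M.contract' ↑C)).natAbs :=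
  abs_redEuler_eq_sum_circuits' M e heE
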